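/- For positive integers g and ℓ, let n'_{g,ℓ} denote the number of gapsets of genus g all of whose Kunz coordinates lie in [ℓ, 2ℓ+1]. Then n'_{g,ℓ} ≤ Σ_{i=ℓ}^{2ℓ+1} n'_{g−i,ℓ}. -/

import Mathlib

def IsGapset (G : Finset ℕ) : Prop :=
  0 ∉ G ∧ ∀ z ∈ G, ∀ x y : ℕ, 0 < x → 0 < y → x + y = z → x ∈ G ∨ y ∈ G

def IsNumSgp (S : Set ℕ) : Prop :=
  0 ∈ S ∧ (∀ a ∈ S, ∀ b ∈ S, a + b ∈ S) ∧ Sᶜ.Finite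

noncomputable def mult (G : Finset ℕ) : ℕ := sInf {s : ℕ | 0 < s ∧ s ∉ G}

noncomputable def kunz (G : Finset ℕ) (i : ℕ) : ℕ := (G.filter (fun z => z % mult G = i)).card

noncomputable def gapConductor (G : Finset ℕ) : ℕ := sInf {s : ℕ | 0 < s ∧ ∀ n : ℕ, s + n ∉ G}

noncomputable def gapDepth (G : Finset ℕ) : ℕ := (gapConductor G + mult G - 1) / mult G

def KunzIneq (m : ℕ) (k : ℕ → ℕ) : Prop :=
  (∀ i j : ℕ, 1 ≤ i → i ≤ j → j ≤ m - 1 → i + j < m → k (i + j) ≤ k i + k j) ∧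
  (∀ i j : ℕ, 1 ≤ i → i ≤ j → j ≤ m - 1 → m < i + j → k (i + j - m) ≤ k i + k j + 1)

def Gamma' (g l : ℕ) : Set (Finset ℕ) :=
  {G : Finset ℕ | IsGapset G ∧ G.card = g ∧
    ∀ i : ℕ, 1 ≤ i → i < mult G → kunz G i ∈ Set.Icc l (2 * l + 1)}

noncomputable def n' (g : ℤ) (l : ℕ) : ℕ := if g < 0 then 0 else (Gamma' g.toNat l).ncard

lemma mult_spec (G : Finset ℕ) : 0 < mult G ∧ mult G ∉ G := by
  have hne : {s : ℕ | 0 < s ∧ s ∉ G}.Nonempty := by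
    refine ⟨G.sup id + 1, Nat.succ_pos _, fun h => ?_⟩
    have := Finset.le_sup (f := id) h
    simp only [id_eq] at this
    omega
  exact Nat.sInf_mem hne

lemma mem_of_lt_mult {G : Finset ℕ} {x : ℕ} (hx : 0 < x) (hxm : x < mult G) : x ∈ G := by
  by_contra h
  have : mult G ≤ x := Nat.sInf_le (show x ∈ {s : ℕ | 0 < s ∧ s ∉ G} from ⟨hx, h⟩)
  omega

lemma sub_mult_mem {G : Finset ℕ} (hG : IsGapset G) {z : ℕ} (hz : z ∈ G)
    (hmz : mult G ≤ z) : z - mult G ∈ G := by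
  have hm := mult_spec G
  have hne : z ≠ mult G := fun h => hm.2 (h ▸ hz)
  rcases hG.2 z hz (mult G) (z - mult G) hm.1 (by omega) (by omega) with h | h
  · exact absurd h hm.2
  · exact h

lemma not_mem_of_mod_zero {G : Finset ℕ} (hG : IsGapset G) (z : ℕ)
    (hz : z % mult G = 0) : z ∉ G := by
  induction z using Nat.strong_induction_on with
  | _ z ih =>
    intro hmem
    have hm := mult_spec G
    have hz0 : z ≠ 0 := fun h => hG.1 (h ▸ hmem)
    have hdvd : mult G ∣ z := Nat.dvd_of_mod_eq_zero hz
    have hge : mult G ≤ z := Nat.le_of_dvd (by omega) hdvd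
    have hne : z ≠ mult G := fun h => hm.2 (h ▸ hmem)
    have h1 : z - mult G ∈ G := sub_mult_mem hG hmem hge
    have h2 : (z - mult G) % mult G = 0 :=
      Nat.mod_eq_zero_of_dvd (Nat.dvd_sub hdvd dvd_rfl)
    exact ih (z - mult G) (by omega) h2 h1

lemma one_mem_of_nonempty {G : Finset ℕ} (hG : IsGapset G) (hne : G.Nonempty) : 1 ∈ G := by
  have hmin := G.min'_mem hne
  set z := G.min' hne with hz
  have hz0 : z ≠ 0 := fun h => hG.1 (h ▸ hmin)
  rcases Nat.lt_or_ge z 2 with h | h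
  · have : z = 1 := by omega
    exact this ▸ hmin
  · rcases hG.2 z hmin 1 (z - 1) one_pos (by omega) (by omega) with h1 | h1
    · exact h1
    · have := G.min'_le _ h1
      omega

lemma down_mem {G : Finset ℕ} (hG : IsGapset G) {z : ℕ} (hz : z ∈ G) :
    ∀ d, d ≤ z / mult G → z - d * mult G ∈ G := by
  intro d
  induction d with
  | zero => simpa using hz
  | succ d ih =>
    intro hd
    have hm := (mult_spec G).1
    have h1 : (d + 1) * mult G ≤ (z / mult G) * mult G :=
      Nat.mul_le_mul_right _ hd
    have h2 : (z / mult G) * mult G ≤ z := Nat.div_mul_le_self z (mult G)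
    have h3 : z - d * mult G ∈ G := ih (by omega)
    have h4 : mult G ≤ z - d * mult G := by
      have : d * mult G + mult G ≤ z := by
        calc d * mult G + mult G = (d + 1) * mult G := by ring
        _ ≤ z := le_trans h1 h2
      omega
    have h5 := sub_mult_mem hG h3 h4
    have h6 : z - d * mult G - mult G = z - (d + 1) * mult G := by
      rw [Nat.sub_sub]
      congr 1
      ring
    rwa [h6] at h5

lemma level_mem {G : Finset ℕ} (hG : IsGapset G) {z : ℕ} (hz : z ∈ G) {t : ℕ}
    (ht : t ≤ z / mult G) : z % mult G + t * mult G ∈ G := by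
  have hd := down_mem hG hz (z / mult G - t) (by omega)
  have e1 : (z / mult G - t) * mult G + t * mult G = (z / mult G) * mult G := by
    rw [← Nat.add_mul]
    congr 1
    omega
  have e2 : z % mult G + z / mult G * mult G = z := Nat.mod_add_div' z (mult G)
  generalize hA : (z / mult G - t) * mult G = A at hd e1
  generalize hB : t * mult G = B at e1 ⊢
  generalize hC : z / mult G * mult G = C at e1 e2
  have : z - A = z % mult G + B := by omega
  rwa [this] at hd

lemma div_lt_kunz {G : Finset ℕ} (hG : IsGapset G) {z : ℕ} (hz : z ∈ G) :
    z / mult G < kunz G (z % mult G) := by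
  have hm := (mult_spec G).1
  classical
  have hsub : (Finset.range (z / mult G + 1)).image (fun t => z % mult G + t * mult G) ⊆
      G.filter (fun w => w % mult G = z % mult G) := by
    intro w hw
    simp only [Finset.mem_image, Finset.mem_range] at hw
    obtain ⟨t, ht, rfl⟩ := hw
    refine Finset.mem_filter.mpr ⟨level_mem hG hz (by omega), ?_⟩
    rw [Nat.add_mul_mod_self_right, Nat.mod_mod_of_dvd _ dvd_rfl]
  have hcard : (Finset.range (z / mult G + 1)).card =
      ((Finset.range (z / mult G + 1)).image (fun t => z % mult G + t * mult G)).card := by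
    rw [Finset.card_image_of_injective]
    intro a b hab
    simp only at hab
    exact Nat.eq_of_mul_eq_mul_right hm (by omega)
  have := Finset.card_le_card hsub
  simp only [Finset.card_range] at hcard
  unfold kunz
  omega

lemma mem_of_lt_kunz {G : Finset ℕ} (hG : IsGapset G) {z : ℕ} (h0 : z % mult G ≠ 0)
    (hk : z / mult G < kunz G (z % mult G)) : z ∈ G := by
  have hm := (mult_spec G).1
  classical
  set L := (G.filter (fun w => w % mult G = z % mult G)).image (fun w => w / mult G) with hL
  have hcard : L.card = kunz G (z % mult G) := by
    rw [hL]
    rw [Finset.card_image_of_injOn]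
    · rfl
    intro a ha b hb hab
    simp only [Finset.mem_coe, Finset.mem_filter] at ha hb
    simp only at hab
    have e1 : mult G * (a / mult G) + a % mult G = a := Nat.div_add_mod a (mult G)
    have e2 : mult G * (b / mult G) + b % mult G = b := Nat.div_add_mod b (mult G)
    generalize hA : mult G * (a / mult G) = A at e1
    generalize hB : mult G * (b / mult G) = B at e2
    have hAB : A = B := by rw [← hA, ← hB, hab]
    omega
  have hdc : ∀ j ∈ L, ∀ t, t ≤ j → t ∈ L := by
    intro j hj t ht
    rw [hL] at hj ⊢
    simp only [Finset.mem_image, Finset.mem_filter] at hj ⊢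
    obtain ⟨w, ⟨hwG, hwm⟩, rfl⟩ := hj
    refine ⟨w % mult G + t * mult G, ⟨level_mem hG hwG ht, ?_⟩, ?_⟩
    · rw [Nat.add_mul_mod_self_right, Nat.mod_mod_of_dvd _ dvd_rfl, hwm]
    · rw [Nat.add_mul_div_right _ _ hm, Nat.div_eq_of_lt (Nat.mod_lt w hm)]
      omega
  have hrange : L = Finset.range L.card := by
    have hsub : L ⊆ Finset.range L.card := by
      intro j hj
      rw [Finset.mem_range]
      have hss : Finset.range (j + 1) ⊆ L := by
        intro t ht
        rw [Finset.mem_range] at ht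
        exact hdc j hj t (by omega)
      have := Finset.card_le_card hss
      simp at this
      omega
    exact Finset.eq_of_subset_of_card_le hsub (by simp)
  have hzL : z / mult G ∈ L := by
    rw [hrange, Finset.mem_range, hcard]
    exact hk
  rw [hL] at hzL
  simp only [Finset.mem_image, Finset.mem_filter] at hzL
  obtain ⟨w, ⟨hwG, hwm⟩, hwd⟩ := hzL
  have e1 : mult G * (w / mult G) + w % mult G = w := Nat.div_add_mod w (mult G)
  have e2 : mult G * (z / mult G) + z % mult G = z := Nat.div_add_mod z (mult G)
  have : w = z := by rw [← e1, hwm, hwd, e2]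
  rwa [this] at hwG

lemma mem_iff {G : Finset ℕ} (hG : IsGapset G) (z : ℕ) :
    z ∈ G ↔ z % mult G ≠ 0 ∧ z / mult G < kunz G (z % mult G) := by
  constructor
  · intro hz
    exact ⟨fun h => not_mem_of_mod_zero hG z h hz, div_lt_kunz hG hz⟩
  · intro ⟨h1, h2⟩
    exact mem_of_lt_kunz hG h1 h2

lemma kunz_pos {G : Finset ℕ} {r : ℕ} (hr : 0 < r) (hrm : r < mult G) :
    0 < kunz G r := by
  have hrG : r ∈ G := mem_of_lt_mult hr hrm
  have : r ∈ G.filter (fun z => z % mult G = r) :=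
    Finset.mem_filter.mpr ⟨hrG, Nat.mod_eq_of_lt hrm⟩
  exact Finset.card_pos.mpr ⟨r, this⟩

lemma card_eq_sum_kunz {G : Finset ℕ} (hG : IsGapset G) :
    G.card = ∑ r ∈ Finset.Icc 1 (mult G - 1), kunz G r := by
  classical
  have hm := (mult_spec G).1
  rw [Finset.card_eq_sum_card_fiberwise (f := fun z => z % mult G)
    (t := Finset.Icc 1 (mult G - 1))]
  · rfl
  · intro z hz
    have h0 : z % mult G ≠ 0 := fun h => not_mem_of_mod_zero hG z h hz
    have h1 : z % mult G < mult G := Nat.mod_lt z hm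
    simp only [Finset.mem_coe, Finset.mem_Icc]
    omega

lemma kunz_add_le {G : Finset ℕ} (hG : IsGapset G) {i j : ℕ} (hi : 1 ≤ i) (hj : 1 ≤ j)
    (hij : i + j < mult G) : kunz G (i + j) ≤ kunz G i + kunz G j := by
  by_contra hcon
  push_neg at hcon
  have hm := (mult_spec G).1
  set z := (i + j) + (kunz G i + kunz G j) * mult G with hz
  have hzmod : z % mult G = i + j := by
    rw [hz, Nat.add_mul_mod_self_right, Nat.mod_eq_of_lt hij]
  have hzdiv : z / mult G = kunz G i + kunz G j := by
    rw [hz, Nat.add_mul_div_right _ _ hm, Nat.div_eq_of_lt hij]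
    omega
  have hzG : z ∈ G := mem_of_lt_kunz hG (by omega) (by rw [hzmod, hzdiv]; exact hcon)
  have hx : i + kunz G i * mult G ∉ G := by
    intro h
    have h1 := (mem_iff hG _).mp h
    rw [Nat.add_mul_mod_self_right, Nat.mod_eq_of_lt (by omega),
      Nat.add_mul_div_right _ _ hm, Nat.div_eq_of_lt (by omega)] at h1
    omega
  have hy : j + kunz G j * mult G ∉ G := by
    intro h
    have h1 := (mem_iff hG _).mp h
    rw [Nat.add_mul_mod_self_right, Nat.mod_eq_of_lt (by omega),
      Nat.add_mul_div_right _ _ hm, Nat.div_eq_of_lt (by omega)] at h1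
    omega
  rcases hG.2 z hzG (i + kunz G i * mult G) (j + kunz G j * mult G)
    (by omega) (by omega) (by rw [hz]; ring) with h | h
  · exact hx h
  · exact hy h

lemma two_le_mult {G : Finset ℕ} (hG : IsGapset G) (hne : G.Nonempty) : 2 ≤ mult G := by
  have h1 := one_mem_of_nonempty hG hne
  have hm := mult_spec G
  have : mult G ≠ 1 := fun h => hm.2 (h ▸ h1)
  omega

lemma kunz_le_card {G : Finset ℕ} (r : ℕ) : kunz G r ≤ G.card :=
  Finset.card_le_card (Finset.filter_subset _ _)

lemma mult_le_card {G : Finset ℕ} (hG : IsGapset G) : mult G ≤ G.card + 1 := by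
  have hm := (mult_spec G).1
  have hsub : Finset.Icc 1 (mult G - 1) ⊆ G := by
    intro x hx
    rw [Finset.mem_Icc] at hx
    exact mem_of_lt_mult (by omega) (by omega)
  have := Finset.card_le_card hsub
  simp [Nat.card_Icc] at this
  omega

lemma mem_bound {G : Finset ℕ} (hG : IsGapset G) {z : ℕ} (hz : z ∈ G) :
    z < (G.card + 1) * (G.card + 1) := by
  have hm := (mult_spec G).1
  have h1 := (mem_iff hG z).mp hz
  have h2 : kunz G (z % mult G) ≤ G.card := kunz_le_card _
  have h3 : mult G ≤ G.card + 1 := mult_le_card hG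
  have h4 : z % mult G < mult G := Nat.mod_lt z hm
  have e : mult G * (z / mult G) + z % mult G = z := Nat.div_add_mod z (mult G)
  have h5 : mult G * (z / mult G) ≤ (G.card + 1) * (G.card) := by
    calc mult G * (z / mult G) ≤ (G.card + 1) * (z / mult G) :=
      Nat.mul_le_mul_right _ h3
    _ ≤ (G.card + 1) * G.card := Nat.mul_le_mul_left _ (by omega)
  have : (G.card + 1) * (G.card + 1) = (G.card + 1) * G.card + (G.card + 1) := by ring
  omega

noncomputable def mkG (μ : ℕ) (c : ℕ → ℕ) : Finset ℕ :=
  (Finset.range (μ * (1 + (Finset.range μ).sup c))).filter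
    (fun z => z % μ ≠ 0 ∧ z / μ < c (z % μ))

lemma mem_mkG {μ : ℕ} (hμ : 0 < μ) (c : ℕ → ℕ) (z : ℕ) :
    z ∈ mkG μ c ↔ z % μ ≠ 0 ∧ z / μ < c (z % μ) := by
  constructor
  · intro hz
    exact (Finset.mem_filter.mp hz).2
  · intro ⟨h1, h2⟩
    refine Finset.mem_filter.mpr ⟨?_, h1, h2⟩
    rw [Finset.mem_range]
    have hs : c (z % μ) ≤ (Finset.range μ).sup c :=
      Finset.le_sup (Finset.mem_range.mpr (Nat.mod_lt z hμ))
    have e : μ * (z / μ) + z % μ = z := Nat.div_add_mod z μ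
    have h3 : z % μ < μ := Nat.mod_lt z hμ
    have h4 : μ * (z / μ + 1) ≤ μ * (1 + (Finset.range μ).sup c) :=
      Nat.mul_le_mul_left μ (by omega)
    have h5 : μ * (z / μ + 1) = μ * (z / μ) + μ := by ring
    omega

lemma isGapset_mkG {μ : ℕ} (hμ : 0 < μ) (c : ℕ → ℕ)
    (hc1 : ∀ i j, 1 ≤ i → 1 ≤ j → i + j < μ → c (i + j) ≤ c i + c j)
    (hc2 : ∀ i j, 1 ≤ i → 1 ≤ j → i < μ → j < μ → μ < i + j → c (i + j - μ) ≤ c i + c j + 1) :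
    IsGapset (mkG μ c) := by
  constructor
  · intro h
    exact ((mem_mkG hμ c 0).mp h).1 (Nat.zero_mod μ)
  · intro z hz x y hx0 hy0 hxy
    rw [mem_mkG hμ] at hz
    by_contra hcon
    push_neg at hcon
    obtain ⟨hx, hy⟩ := hcon
    rw [mem_mkG hμ] at hx hy
    push_neg at hx hy
    have hzmod : z % μ = (x % μ + y % μ) % μ := by
      rw [← hxy, Nat.add_mod]
    by_cases ha : x % μ = 0
    · -- then y ∈ mkG
      have h1 : z % μ = y % μ := by
        rw [hzmod, ha, Nat.zero_add, Nat.mod_mod_of_dvd _ dvd_rfl]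
      have h2 : y / μ ≤ z / μ := Nat.div_le_div_right (by omega)
      have := hy (by omega)
      rw [← h1] at this
      omega
    by_cases hb : y % μ = 0
    · have h1 : z % μ = x % μ := by
        rw [hzmod, hb, Nat.add_zero, Nat.mod_mod_of_dvd _ dvd_rfl]
      have h2 : x / μ ≤ z / μ := Nat.div_le_div_right (by omega)
      have := hx (by omega)
      rw [← h1] at this
      omega
    -- both residues nonzero
    have hxk : c (x % μ) ≤ x / μ := hx ha
    have hyk : c (y % μ) ≤ y / μ := hy hb
    have hax : x % μ < μ := Nat.mod_lt x hμ
    have hbx : y % μ < μ := Nat.mod_lt y hμ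
    have ex : μ * (x / μ) + x % μ = x := Nat.div_add_mod x μ
    have ey : μ * (y / μ) + y % μ = y := Nat.div_add_mod y μ
    have ez : μ * (z / μ) + z % μ = z := Nat.div_add_mod z μ
    have mx : μ * c (x % μ) ≤ μ * (x / μ) := Nat.mul_le_mul_left μ hxk
    have my : μ * c (y % μ) ≤ μ * (y / μ) := Nat.mul_le_mul_left μ hyk
    by_cases hab : x % μ + y % μ < μ
    · have hr : z % μ = x % μ + y % μ := by
        rw [hzmod, Nat.mod_eq_of_lt hab]
      have hcr : c (x % μ + y % μ) ≤ c (x % μ) + c (y % μ) :=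
        hc1 _ _ (by omega) (by omega) hab
      -- z / μ ≥ c (x%μ) + c (y%μ)
      have hzl : (c (x % μ) + c (y % μ)) * μ ≤ z := by
        have : (c (x % μ) + c (y % μ)) * μ = μ * c (x % μ) + μ * c (y % μ) := by ring
        omega
      have hdiv : c (x % μ) + c (y % μ) ≤ z / μ := (Nat.le_div_iff_mul_le hμ).mpr hzl
      rw [hr] at hz
      omega
    · push_neg at hab
      have hne : x % μ + y % μ ≠ μ := by
        intro h
        rw [hzmod, h, Nat.mod_self] at hz
        exact hz.1 rfl
      have hlt : μ < x % μ + y % μ := by omega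
      have hr : z % μ = x % μ + y % μ - μ := by
        rw [hzmod, Nat.mod_eq_sub_mod (by omega), Nat.mod_eq_of_lt (by omega)]
      have hcr : c (x % μ + y % μ - μ) ≤ c (x % μ) + c (y % μ) + 1 :=
        hc2 _ _ (by omega) (by omega) hax hbx hlt
      have hzl : (c (x % μ) + c (y % μ) + 1) * μ ≤ z := by
        have : (c (x % μ) + c (y % μ) + 1) * μ = μ * c (x % μ) + μ * c (y % μ) + μ := by ring
        omega
      have hdiv : c (x % μ) + c (y % μ) + 1 ≤ z / μ := (Nat.le_div_iff_mul_le hμ).mpr hzl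
      rw [hr] at hz
      omega

lemma mult_mkG {μ : ℕ} (hμ : 0 < μ) (c : ℕ → ℕ)
    (hc : ∀ r, 1 ≤ r → r < μ → 1 ≤ c r) : mult (mkG μ c) = μ := by
  have h1 : μ ∈ {s : ℕ | 0 < s ∧ s ∉ mkG μ c} := by
    refine ⟨hμ, fun h => ?_⟩
    exact ((mem_mkG hμ c μ).mp h).1 (Nat.mod_self μ)
  have h2 : mult (mkG μ c) ≤ μ := Nat.sInf_le h1
  have h3 : 0 < mult (mkG μ c) ∧ mult (mkG μ c) ∉ mkG μ c :=
    Nat.sInf_mem (⟨μ, h1⟩ : {s : ℕ | 0 < s ∧ s ∉ mkG μ c}.Nonempty)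
  rcases Nat.lt_or_ge (mult (mkG μ c)) μ with h | h
  · exfalso
    apply h3.2
    rw [mem_mkG hμ]
    have h4 : 0 < mult (mkG μ c) := h3.1
    constructor
    · rw [Nat.mod_eq_of_lt h]
      omega
    · rw [Nat.mod_eq_of_lt h, Nat.div_eq_of_lt h]
      exact hc _ (by omega) h
  · omega

lemma kunz_mkG {μ : ℕ} (hμ : 0 < μ) (c : ℕ → ℕ)
    (hc : ∀ r, 1 ≤ r → r < μ → 1 ≤ c r) {r : ℕ} (hr1 : 1 ≤ r) (hrμ : r < μ) :
    kunz (mkG μ c) r = c r := by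
  classical
  unfold kunz
  rw [mult_mkG hμ c hc]
  have hset : (mkG μ c).filter (fun z => z % μ = r) =
      (Finset.range (c r)).image (fun j => r + j * μ) := by
    ext z
    simp only [Finset.mem_filter, Finset.mem_image, Finset.mem_range]
    constructor
    · intro ⟨hz, hzr⟩
      rw [mem_mkG hμ] at hz
      refine ⟨z / μ, by rw [← hzr]; exact hz.2, ?_⟩
      have e : μ * (z / μ) + z % μ = z := Nat.div_add_mod z μ
      have : z / μ * μ = μ * (z / μ) := by ring
      omega
    · rintro ⟨j, hj, rfl⟩
      constructor
      · rw [mem_mkG hμ]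
        rw [Nat.add_mul_mod_self_right, Nat.mod_eq_of_lt hrμ,
          Nat.add_mul_div_right _ _ hμ, Nat.div_eq_of_lt hrμ]
        omega
      · rw [Nat.add_mul_mod_self_right, Nat.mod_eq_of_lt hrμ]
  rw [hset, Finset.card_image_of_injective, Finset.card_range]
  intro a b hab
  simp only at hab
  have : a * μ = b * μ := by omega
  exact Nat.eq_of_mul_eq_mul_right hμ this

lemma gamma_finite (g l : ℕ) : (Gamma' g l).Finite := by
  apply Set.Finite.subset (Finset.range ((g + 1) * (g + 1))).powerset.finite_toSet
  intro G hG
  simp only [Finset.coe_powerset, Set.mem_preimage, Set.mem_powerset_iff,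
    Finset.coe_range, Finset.mem_coe]
  intro z hz
  simp only [Finset.coe_range, Set.mem_Iio]
  have := mem_bound hG.1 hz
  rw [hG.2.1] at this
  exact this

lemma two_le_mult_of_gamma {G : Finset ℕ} {g l : ℕ} (hg : 0 < g) (hG : G ∈ Gamma' g l) :
    2 ≤ mult G := by
  apply two_le_mult hG.1
  rw [← Finset.card_pos, hG.2.1]
  exact hg

lemma kunz_top_mem {G : Finset ℕ} {g l : ℕ} (hg : 0 < g) (hG : G ∈ Gamma' g l) :
    kunz G (mult G - 1) ∈ Finset.Icc l (2 * l + 1) := by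
  have hm2 := two_le_mult_of_gamma hg hG
  have := hG.2.2 (mult G - 1) (by omega) (by omega)
  rw [Set.mem_Icc] at this
  rw [Finset.mem_Icc]
  exact this

lemma kunz_top_le_genus {G : Finset ℕ} {g l : ℕ} (hg : 0 < g) (hG : G ∈ Gamma' g l) :
    kunz G (mult G - 1) ≤ g := by
  have hm2 := two_le_mult_of_gamma hg hG
  have hcard := card_eq_sum_kunz hG.1
  rw [hG.2.1] at hcard
  have : kunz G (mult G - 1) ≤ ∑ r ∈ Finset.Icc 1 (mult G - 1), kunz G r :=
    Finset.single_le_sum (f := fun r => kunz G r) (fun _ _ => Nat.zero_le _)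
      (Finset.mem_Icc.mpr ⟨by omega, le_refl _⟩)
  omega

lemma phi_mem {G : Finset ℕ} {g l : ℕ} (hg : 0 < g) (hl : 0 < l) (hG : G ∈ Gamma' g l) :
    mkG (mult G - 1) (kunz G) ∈ Gamma' (g - kunz G (mult G - 1)) l ∧
    mult (mkG (mult G - 1) (kunz G)) = mult G - 1 := by
  obtain ⟨hgap, hcard, hk⟩ := hG
  have hm2 : 2 ≤ mult G := two_le_mult_of_gamma hg ⟨hgap, hcard, hk⟩
  set μ := mult G - 1 with hμdef
  have hμ : 0 < μ := by omega
  have hcpos : ∀ r, 1 ≤ r → r < μ → 1 ≤ kunz G r := by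
    intro r h1 h2
    have := (hk r h1 (by omega)).1
    omega
  have hc1 : ∀ i j, 1 ≤ i → 1 ≤ j → i + j < μ → kunz G (i + j) ≤ kunz G i + kunz G j := by
    intro i j hi hj hij
    exact kunz_add_le hgap hi hj (by omega)
  have hc2 : ∀ i j, 1 ≤ i → 1 ≤ j → i < μ → j < μ → μ < i + j →
      kunz G (i + j - μ) ≤ kunz G i + kunz G j + 1 := by
    intro i j hi hj hiμ hjμ hij
    have h1 := (hk (i + j - μ) (by omega) (by omega)).2
    have h2 := (hk i hi (by omega)).1
    have h3 := (hk j hj (by omega)).1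
    omega
  have hgap' : IsGapset (mkG μ (kunz G)) := isGapset_mkG hμ _ hc1 hc2
  have hmult' : mult (mkG μ (kunz G)) = μ := mult_mkG hμ _ hcpos
  have hkunz' : ∀ r, 1 ≤ r → r < μ → kunz (mkG μ (kunz G)) r = kunz G r :=
    fun r h1 h2 => kunz_mkG hμ _ hcpos h1 h2
  have hgsum : g = ∑ r ∈ Finset.Icc 1 (mult G - 1), kunz G r := by
    rw [← card_eq_sum_kunz hgap, hcard]
  have hsplit : ∑ r ∈ Finset.Icc 1 (mult G - 1), kunz G r =
      ∑ r ∈ Finset.Icc 1 (μ - 1), kunz G r + kunz G (mult G - 1) := by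
    have hrw : mult G - 1 = (μ - 1) + 1 := by omega
    rw [hrw, Finset.sum_Icc_succ_top (by omega)]
  have hcard' : (mkG μ (kunz G)).card = g - kunz G (mult G - 1) := by
    rw [card_eq_sum_kunz hgap', hmult']
    have : ∑ r ∈ Finset.Icc 1 (μ - 1), kunz (mkG μ (kunz G)) r =
        ∑ r ∈ Finset.Icc 1 (μ - 1), kunz G r := by
      apply Finset.sum_congr rfl
      intro r hr
      rw [Finset.mem_Icc] at hr
      exact hkunz' r hr.1 (by omega)
    rw [this]
    omega
  refine ⟨⟨hgap', hcard', ?_⟩, hmult'⟩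
  intro r h1 h2
  rw [hmult'] at h2
  rw [hkunz' r h1 h2]
  exact hk r h1 (by omega)

lemma phi_inj {G₁ G₂ : Finset ℕ} {g l : ℕ} (hg : 0 < g) (hl : 0 < l)
    (h1 : G₁ ∈ Gamma' g l) (h2 : G₂ ∈ Gamma' g l)
    (htop : kunz G₁ (mult G₁ - 1) = kunz G₂ (mult G₂ - 1))
    (heq : mkG (mult G₁ - 1) (kunz G₁) = mkG (mult G₂ - 1) (kunz G₂)) : G₁ = G₂ := by
  have p1 := phi_mem hg hl h1
  have p2 := phi_mem hg hl h2
  have hm1 : 2 ≤ mult G₁ := two_le_mult_of_gamma hg h1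
  have hm2 : 2 ≤ mult G₂ := two_le_mult_of_gamma hg h2
  have hmm : mult G₁ = mult G₂ := by
    have := p1.2
    rw [heq, p2.2] at this
    omega
  have hμ : 0 < mult G₁ - 1 := by omega
  have hcpos1 : ∀ r, 1 ≤ r → r < mult G₁ - 1 → 1 ≤ kunz G₁ r := by
    intro r hr1 hr2
    have := (h1.2.2 r hr1 (by omega)).1
    omega
  have hcpos2 : ∀ r, 1 ≤ r → r < mult G₂ - 1 → 1 ≤ kunz G₂ r := by
    intro r hr1 hr2
    have := (h2.2.2 r hr1 (by omega)).1
    omega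
  have hkeq : ∀ r, 1 ≤ r → r < mult G₁ → kunz G₁ r = kunz G₂ r := by
    intro r hr1 hr2
    rcases Nat.lt_or_ge r (mult G₁ - 1) with h | h
    · have e1 : kunz (mkG (mult G₁ - 1) (kunz G₁)) r = kunz G₁ r :=
        kunz_mkG hμ _ hcpos1 hr1 h
      have e2 : kunz (mkG (mult G₂ - 1) (kunz G₂)) r = kunz G₂ r :=
        kunz_mkG (by omega) _ hcpos2 hr1 (by omega)
      rw [← e1, heq, e2]
    · have : r = mult G₁ - 1 := by omega
      rw [this, htop, hmm]
  ext z
  rw [mem_iff h1.1, mem_iff h2.1, ← hmm]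
  have hmpos : 0 < mult G₁ := by omega
  constructor
  · intro ⟨ha, hb⟩
    refine ⟨ha, ?_⟩
    rw [← hkeq (z % mult G₁) (by omega) (Nat.mod_lt z hmpos)]
    exact hb
  · intro ⟨ha, hb⟩
    refine ⟨ha, ?_⟩
    rw [hkeq (z % mult G₁) (by omega) (Nat.mod_lt z hmpos)]
    exact hb

theorem n'_upper_bound (g l : ℕ) (hg : 0 < g) (hl : 0 < l) :
    n' (g : ℤ) l ≤ ∑ i ∈ Finset.Icc l (2 * l + 1), n' ((g : ℤ) - (i : ℤ)) l := by
  classical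
  have hA : n' (g : ℤ) l = (gamma_finite g l).toFinset.card := by
    rw [n', if_neg (by omega), show ((g : ℕ) : ℤ).toNat = g from by omega]
    exact Set.ncard_eq_toFinset_card _ (gamma_finite g l)
  set A := (gamma_finite g l).toFinset with hAdef
  have hsub : A ⊆ (Finset.Icc l (2 * l + 1)).biUnion
      (fun i => A.filter (fun G => kunz G (mult G - 1) = i)) := by
    intro G hGA
    have hGmem : G ∈ Gamma' g l := (Set.Finite.mem_toFinset _).mp hGA
    exact Finset.mem_biUnion.mpr
      ⟨kunz G (mult G - 1), kunz_top_mem hg hGmem, Finset.mem_filter.mpr ⟨hGA, rfl⟩⟩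
  have hstep : ∀ i ∈ Finset.Icc l (2 * l + 1),
      (A.filter (fun G => kunz G (mult G - 1) = i)).card ≤ n' ((g : ℤ) - (i : ℤ)) l := by
    intro i _
    by_cases hi : i ≤ g
    · have hn : n' ((g : ℤ) - (i : ℤ)) l = (gamma_finite (g - i) l).toFinset.card := by
        rw [n', if_neg (by omega), show ((g : ℤ) - (i : ℤ)).toNat = g - i from by omega]
        exact Set.ncard_eq_toFinset_card _ (gamma_finite (g - i) l)
      rw [hn]
      apply Finset.card_le_card_of_injOn (fun G => mkG (mult G - 1) (kunz G))
      · intro G hGf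
        rw [Finset.mem_coe, Finset.mem_filter] at hGf
        obtain ⟨hGA, htop⟩ := hGf
        have hGmem : G ∈ Gamma' g l := (Set.Finite.mem_toFinset _).mp hGA
        rw [Finset.mem_coe, Set.Finite.mem_toFinset]
        have := (phi_mem hg hl hGmem).1
        rwa [htop] at this
      · intro G₁ hG1 G₂ hG2 heq
        simp only [Finset.coe_filter, Set.mem_setOf_eq] at hG1 hG2
        exact phi_inj hg hl ((Set.Finite.mem_toFinset _).mp hG1.1)
          ((Set.Finite.mem_toFinset _).mp hG2.1) (by rw [hG1.2, hG2.2]) heq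
    · have hempty : A.filter (fun G => kunz G (mult G - 1) = i) = ∅ := by
        rw [Finset.filter_eq_empty_iff]
        intro G hGA htop
        have hGmem : G ∈ Gamma' g l := (Set.Finite.mem_toFinset _).mp hGA
        have := kunz_top_le_genus hg hGmem
        omega
      rw [hempty]
      simp
  calc n' (g : ℤ) l = A.card := hA
    _ ≤ ((Finset.Icc l (2 * l + 1)).biUnion
        (fun i => A.filter (fun G => kunz G (mult G - 1) = i))).card :=
      Finset.card_le_card hsub
    _ ≤ ∑ i ∈ Finset.Icc l (2 * l + 1),
        (A.filter (fun G => kunz G (mult G - 1) = i)).card := Finset.card_biUnion_le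
    _ ≤ ∑ i ∈ Finset.Icc l (2 * l + 1), n' ((g : ℤ) - (i : ℤ)) l :=
      Finset.sum_le_sum hstep
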